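/- Let F : ℝ → ℝ be continuous and assume that the zero set Q = {ζ ∈ ℝ : F(ζ) = 0} contains no nondegenerate interval, i.e., there are no a < b with [a,b] ⊆ Q. Let ζ : [0, ∞) → ℝ be a bounded C¹ function, let λ : [0, ∞) → ℝ be continuous with λ(t) → 0 as t → ∞, and assume the ODE (1/4π)·ζ′(t) + F(ζ(t)) = λ(t) holds for all t ≥ 0. Then there exists q ∈ ℝ with F(q) = 0 such that ζ(t) → q as t → ∞. -/

import Mathlib

open Filter

/-- If `g' ≤ -c` on `[T,∞)`, then `g t ≤ g T - c (t - T)` there. -/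
lemma decay_aux (g g' : ℝ → ℝ) (c T : ℝ)
    (hderiv : ∀ t, T ≤ t → HasDerivAt g (g' t) t)
    (hle : ∀ t, T ≤ t → g' t ≤ -c) :
    ∀ t, T ≤ t → g t ≤ g T - c * (t - T) := by
  intro t ht
  have hd : ∀ s ∈ Set.Ici T, HasDerivAt (fun x => g x + c * x) (g' s + c) s := by
    intro s hs
    exact (hderiv s hs).add (by simpa using (hasDerivAt_id s).const_mul c)
  have hanti : AntitoneOn (fun x => g x + c * x) (Set.Ici T) := by
    apply antitoneOn_of_deriv_nonpos (convex_Ici T)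
    · intro s hs; exact (hd s hs).continuousAt.continuousWithinAt
    · intro s hs
      rw [interior_Ici] at hs
      exact (hd s (Set.Ioi_subset_Ici_self hs)).differentiableAt.differentiableWithinAt
    · intro s hs
      rw [interior_Ici] at hs
      rw [(hd s (Set.Ioi_subset_Ici_self hs)).deriv]
      linarith [hle s (le_of_lt hs)]
  have := hanti (Set.mem_Ici.mpr le_rfl) (Set.mem_Ici.mpr ht) ht
  simp only at this
  linarith

/-- A function cannot cross a band `[p,q]` upward if its derivative is negative
on the band. -/
lemma no_upcross (g g' : ℝ → ℝ) (p q t1 t2 : ℝ) (hpq : p < q) (ht12 : t1 ≤ t2)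
    (hderiv : ∀ t ∈ Set.Icc t1 t2, HasDerivAt g (g' t) t)
    (hneg : ∀ t ∈ Set.Icc t1 t2, g t ∈ Set.Icc p q → g' t < 0)
    (h1 : g t1 < p) (h2 : q < g t2) : False := by
  have hcont : ContinuousOn g (Set.Icc t1 t2) := fun t ht =>
    (hderiv t ht).continuousAt.continuousWithinAt
  -- first time the function reaches level q
  set A : Set ℝ := Set.Icc t1 t2 ∩ g ⁻¹' Set.Ici q with hA
  have hAclosed : IsClosed A := hcont.preimage_isClosed_of_isClosed isClosed_Icc isClosed_Ici
  have hAne : A.Nonempty := ⟨t2, Set.right_mem_Icc.mpr ht12, le_of_lt h2⟩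
  have hAbdd : BddBelow A := ⟨t1, fun x hx => hx.1.1⟩
  set u := sInf A with hu
  have huA : u ∈ A := hAclosed.csInf_mem hAne hAbdd
  have hu1 : t1 ≤ u := huA.1.1
  have hu2 : u ≤ t2 := huA.1.2
  have hgu : q ≤ g u := huA.2
  -- last time before u at level ≤ p
  set B : Set ℝ := Set.Icc t1 u ∩ g ⁻¹' Set.Iic p with hB
  have hBclosed : IsClosed B :=
    (hcont.mono (Set.Icc_subset_Icc_right hu2)).preimage_isClosed_of_isClosed
      isClosed_Icc isClosed_Iic
  have hBne : B.Nonempty := ⟨t1, Set.left_mem_Icc.mpr hu1, le_of_lt h1⟩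
  have hBbdd : BddAbove B := ⟨u, fun x hx => hx.1.2⟩
  set s := sSup B with hs
  have hsB : s ∈ B := hBclosed.csSup_mem hBne hBbdd
  have hs1 : t1 ≤ s := hsB.1.1
  have hsu : s ≤ u := hsB.1.2
  have hgs : g s ≤ p := hsB.2
  have hslt : s < u := lt_of_le_of_ne hsu (fun h => by rw [h] at hgs; linarith)
  -- on (s, u) the function stays in (p, q)
  have hband : ∀ t ∈ Set.Ioo s u, g t ∈ Set.Icc p q := by
    intro t ht
    have htmem : t ∈ Set.Icc t1 t2 := ⟨le_trans hs1 (le_of_lt ht.1), le_trans (le_of_lt ht.2) hu2⟩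
    constructor
    · by_contra hlt
      push_neg at hlt
      have : t ∈ B := ⟨⟨htmem.1, le_of_lt ht.2⟩, le_of_lt hlt⟩
      exact absurd (le_csSup hBbdd this) (not_le.mpr ht.1)
    · by_contra hgt
      push_neg at hgt
      have : t ∈ A := ⟨htmem, le_of_lt hgt⟩
      exact absurd (csInf_le hAbdd this) (not_le.mpr ht.2)
  have hsub : Set.Icc s u ⊆ Set.Icc t1 t2 :=
    Set.Icc_subset_Icc hs1 hu2
  have hanti : StrictAntiOn g (Set.Icc s u) := by
    apply strictAntiOn_of_deriv_neg (convex_Icc s u) (hcont.mono hsub)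
    intro t ht
    rw [interior_Icc] at ht
    have htmem := hsub (Set.Ioo_subset_Icc_self ht)
    rw [(hderiv t htmem).deriv]
    exact hneg t htmem (hband t ht)
  have := hanti (Set.left_mem_Icc.mpr hsu) (Set.right_mem_Icc.mpr hsu) hslt
  linarith

theorem reduced_ode_convergence_to_zero_of_F
    (F : ℝ → ℝ) (hF : Continuous F)
    (hQ : ∀ a b : ℝ, a < b → ¬ (Set.Icc a b ⊆ {ζ : ℝ | F ζ = 0}))
    (ζ ζ' lam : ℝ → ℝ)
    (hderiv : ∀ t : ℝ, 0 ≤ t → HasDerivAt ζ (ζ' t) t)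
    (hζ'cont : ContinuousOn ζ' (Set.Ici 0))
    (hbdd : ∃ C : ℝ, ∀ t : ℝ, 0 ≤ t → |ζ t| ≤ C)
    (hlamcont : ContinuousOn lam (Set.Ici 0))
    (hlam : Tendsto lam atTop (nhds 0))
    (hODE : ∀ t : ℝ, 0 ≤ t → (1 / (4 * Real.pi)) * ζ' t + F (ζ t) = lam t) :
    ∃ q : ℝ, F q = 0 ∧ Tendsto ζ atTop (nhds q) := by
  obtain ⟨C, hC⟩ := hbdd
  have pi4 : (0:ℝ) < 4 * Real.pi := by positivity
  -- derivative formula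
  have hz' : ∀ t : ℝ, 0 ≤ t → ζ' t = 4 * Real.pi * (lam t - F (ζ t)) := by
    intro t ht
    have h := hODE t ht
    have h4 : (4 * Real.pi) ≠ 0 := ne_of_gt pi4
    field_simp at h
    nlinarith [h]
  have hbd_le : IsBoundedUnder (· ≤ ·) atTop ζ :=
    isBoundedUnder_of_eventually_le (a := C)
      ((eventually_ge_atTop 0).mono fun t ht => (abs_le.1 (hC t ht)).2)
  have hbd_ge : IsBoundedUnder (· ≥ ·) atTop ζ :=
    isBoundedUnder_of_eventually_ge (a := -C)
      ((eventually_ge_atTop 0).mono fun t ht => (abs_le.1 (hC t ht)).1)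
  set l := liminf ζ atTop with hl
  set L := limsup ζ atTop with hL
  have hlL : l ≤ L := liminf_le_limsup hbd_le hbd_ge
  have hkey : l = L := by
    by_contra hne
    have hlt : l < L := lt_of_le_of_ne hlL hne
    -- find a point in (l, L) where F ≠ 0
    have hab : l + (L - l) / 3 < L - (L - l) / 3 := by linarith
    obtain ⟨c, hc_mem, hFc⟩ : ∃ c ∈ Set.Icc (l + (L - l) / 3) (L - (L - l) / 3), F c ≠ 0 := by
      by_contra h
      push_neg at h
      exact hQ _ _ hab fun x hx => h x hx
    have hlc : l < c := lt_of_lt_of_le (by linarith) hc_mem.1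
    have hcL : c < L := lt_of_le_of_lt hc_mem.2 (by linarith)
    set ε0 := |F c| / 2 with hε0def
    have hε0 : 0 < ε0 := by
      have := abs_pos.mpr hFc
      positivity
    obtain ⟨δ, hδpos, hδ⟩ := Metric.continuous_iff.mp hF c ε0 hε0
    set δ' := min (δ / 2) (min ((c - l) / 2) ((L - c) / 2)) with hδ'def
    have hδ'pos : 0 < δ' := by
      apply lt_min (by linarith) (lt_min (by linarith) (by linarith))
    set p := c - δ' with hpdef
    set q := c + δ' with hqdef
    have hpq : p < q := by simp only [hpdef, hqdef]; linarith
    have hlp : l < p := by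
      have : δ' ≤ (c - l) / 2 := le_trans (min_le_right _ _) (min_le_left _ _)
      simp only [hpdef]; linarith
    have hqL : q < L := by
      have : δ' ≤ (L - c) / 2 := le_trans (min_le_right _ _) (min_le_right _ _)
      simp only [hqdef]; linarith
    have hFband : ∀ x ∈ Set.Icc p q, |F x - F c| < ε0 := by
      intro x hx
      apply hδ
      rw [Real.dist_eq]
      have h1 : δ' ≤ δ / 2 := min_le_left _ _
      have := hx.1; have := hx.2
      rw [abs_lt]
      constructor <;> simp only [hpdef, hqdef] at * <;> linarith
    -- eventual smallness of lam
    have hlamsm : ∀ᶠ t in atTop, |lam t| < ε0 := by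
      have := Metric.tendsto_nhds.mp hlam ε0 hε0
      simpa [Real.dist_eq] using this
    obtain ⟨T, hT⟩ := eventually_atTop.1 (hlamsm.and (eventually_ge_atTop 0))
    -- frequently below p and above q
    have hfreq_lo : ∃ᶠ t in atTop, ζ t < p :=
      frequently_lt_of_liminf_lt hbd_le.isCoboundedUnder_ge hlp
    have hfreq_hi : ∃ᶠ t in atTop, q < ζ t :=
      frequently_lt_of_lt_limsup hbd_ge.isCoboundedUnder_le hqL
    rcases lt_or_gt_of_ne hFc with hFcneg | hFcpos
    · -- F c < 0 : upcrossing of -ζ over [-q, -p]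
      have hFlt : ∀ x ∈ Set.Icc p q, F x < -ε0 := by
        intro x hx
        have := hFband x hx
        rw [abs_lt] at this
        have habs : |F c| = -(F c) := abs_of_neg hFcneg
        simp only [hε0def, habs] at *
        linarith
      obtain ⟨t1, ht1T, ht1⟩ := (hfreq_hi.and_eventually (eventually_ge_atTop T)).exists
      obtain ⟨t2, ht2, ht12⟩ := (hfreq_lo.and_eventually (eventually_ge_atTop t1)).exists
      apply no_upcross (fun t => -ζ t) (fun t => -ζ' t) (-q) (-p) t1 t2 (by linarith) ht12
      · intro t ht
        have ht0 : (0:ℝ) ≤ t := le_trans (hT t1 ht1).2 ht.1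
        exact (hderiv t ht0).neg
      · intro t ht hmem
        have htT : T ≤ t := le_trans ht1 ht.1
        have ht0 : (0:ℝ) ≤ t := (hT t htT).2
        have hlamt : |lam t| < ε0 := (hT t htT).1
        have hband : ζ t ∈ Set.Icc p q := by
          constructor <;> [linarith [hmem.2]; linarith [hmem.1]]
        have hFz : F (ζ t) < -ε0 := hFlt _ hband
        have hz := hz' t ht0
        rw [abs_lt] at hlamt
        have : ζ' t > 0 := by
          rw [hz]
          apply mul_pos pi4
          linarith
        linarith
      · simpa using ht1T
      · simpa using ht2
    · -- F c > 0 : upcrossing of ζ over [p, q]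
      have hFgt : ∀ x ∈ Set.Icc p q, ε0 < F x := by
        intro x hx
        have := hFband x hx
        rw [abs_lt] at this
        have habs : |F c| = F c := abs_of_pos hFcpos
        simp only [hε0def, habs] at *
        linarith
      obtain ⟨t1, ht1, ht1T⟩ := (hfreq_lo.and_eventually (eventually_ge_atTop T)).exists
      obtain ⟨t2, ht2, ht12⟩ := (hfreq_hi.and_eventually (eventually_ge_atTop t1)).exists
      apply no_upcross ζ ζ' p q t1 t2 hpq ht12
      · intro t ht
        have ht0 : (0:ℝ) ≤ t := le_trans (hT t1 ht1T).2 ht.1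
        exact hderiv t ht0
      · intro t ht hmem
        have htT : T ≤ t := le_trans ht1T ht.1
        have ht0 : (0:ℝ) ≤ t := (hT t htT).2
        have hlamt : |lam t| < ε0 := (hT t htT).1
        have hFz : ε0 < F (ζ t) := hFgt _ hmem
        rw [hz' t ht0]
        rw [abs_lt] at hlamt
        apply mul_neg_of_pos_of_neg pi4
        linarith
      · exact ht1
      · exact ht2
  -- now liminf = limsup, so ζ converges to q₀ := l
  refine ⟨l, ?_, ?_⟩
  swap
  · exact tendsto_of_liminf_eq_limsup rfl hkey.symm hbd_le hbd_ge
  · -- F l = 0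
    have htend : Tendsto ζ atTop (nhds l) :=
      tendsto_of_liminf_eq_limsup rfl hkey.symm hbd_le hbd_ge
    by_contra hF0
    set ε0 := |F l| / 2 with hε0def
    have hε0 : 0 < ε0 := by
      have := abs_pos.mpr hF0
      positivity
    have hFz : Tendsto (fun t => F (ζ t)) atTop (nhds (F l)) :=
      (hF.continuousAt.tendsto).comp htend
    have hFzsm : ∀ᶠ t in atTop, |F (ζ t) - F l| < ε0 := by
      have := Metric.tendsto_nhds.mp hFz ε0 hε0
      simpa [Real.dist_eq] using this
    have hlamsm : ∀ᶠ t in atTop, |lam t| < ε0 / 2 := by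
      have := Metric.tendsto_nhds.mp hlam (ε0 / 2) (by positivity)
      simpa [Real.dist_eq] using this
    obtain ⟨T, hT⟩ := eventually_atTop.1
      ((hFzsm.and hlamsm).and (eventually_ge_atTop 0))
    set cc := 2 * Real.pi * ε0 with hccdef
    have hcc : 0 < cc := by positivity
    have hT0 : (0:ℝ) ≤ T := (hT T le_rfl).2
    rcases lt_or_gt_of_ne hF0 with hFlneg | hFlpos
    · -- F l < 0 : ζ' ≥ cc eventually, ζ → +∞
      have hdec := decay_aux (fun x => -ζ x) (fun x => -ζ' x) cc T
        (fun t ht => (hderiv t (le_trans hT0 ht)).neg)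
        (fun t ht => by
          have h1 := (hT t ht).1.1
          have h2 := (hT t ht).1.2
          have ht0 : (0:ℝ) ≤ t := (hT t ht).2
          rw [abs_lt] at h1 h2
          have habs : |F l| = -(F l) := abs_of_neg hFlneg
          have hFzt : F (ζ t) < -ε0 := by
            simp only [hε0def, habs] at h1 ⊢
            linarith
          have : ζ' t ≥ 2 * Real.pi * ε0 := by
            rw [hz' t ht0]
            nlinarith [Real.pi_pos]
          simp only [hccdef]
          linarith)
      have hζT := abs_le.1 (hC T hT0)
      have hd0 : 0 ≤ (C - ζ T + 1) / cc := div_nonneg (by linarith) hcc.le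
      have htT : T ≤ T + (C - ζ T + 1) / cc := by linarith
      have hdd := hdec _ htT
      have heq : cc * (T + (C - ζ T + 1) / cc - T) = C - ζ T + 1 := by
        field_simp
        ring
      have hCt := abs_le.1 (hC _ (le_trans hT0 htT))
      linarith [hCt.2, hdd, heq]
    · -- F l > 0 : ζ' ≤ -cc eventually, ζ → -∞
      have hdec := decay_aux ζ ζ' cc T
        (fun t ht => hderiv t (le_trans hT0 ht))
        (fun t ht => by
          have h1 := (hT t ht).1.1
          have h2 := (hT t ht).1.2
          have ht0 : (0:ℝ) ≤ t := (hT t ht).2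
          rw [abs_lt] at h1 h2
          have habs : |F l| = F l := abs_of_pos hFlpos
          have hFzt : ε0 < F (ζ t) := by
            simp only [hε0def, habs] at h1 ⊢
            linarith
          rw [hz' t ht0]
          simp only [hccdef]
          nlinarith [Real.pi_pos])
      have hζT := abs_le.1 (hC T hT0)
      have hd0 : 0 ≤ (C + ζ T + 1) / cc := div_nonneg (by linarith) hcc.le
      have htT : T ≤ T + (C + ζ T + 1) / cc := by linarith
      have hdd := hdec _ htT
      have heq : cc * (T + (C + ζ T + 1) / cc - T) = C + ζ T + 1 := by
        field_simp
        ring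
      have hCt := abs_le.1 (hC _ (le_trans hT0 htT))
      linarith [hCt.1, hdd, heq]
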